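/- arXiv:2104.00535 — 2 statements merged into one kernel-verified Lean document; each statement's English description precedes it below -/
import Mathlib

section
/- Let G = (V, A) be a finite directed graph, k ∈ V, and υ: A → ℝ_{≥0} a flow such that for every vertex i ≠ k, (outflow of i) − (inflow of i) ≥ 1. Then from every vertex i ∈ V there exists a directed path to k using only arcs with strictly positive flow. -/
open scoped Classical in
theorem positive_flow_path_to_sink {V : Type*} [Fintype V]
    (A : Finset (V × V)) (k : V) (υ : V × V → ℝ)
    (hnn : ∀ e, 0 ≤ υ e)
    (hflow : ∀ i, i ≠ k →
      (∑ j ∈ Finset.univ.filter (fun j => (i, j) ∈ A), υ (i, j)) -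
        (∑ l ∈ Finset.univ.filter (fun l => (l, i) ∈ A), υ (l, i)) ≥ 1) :
    ∀ i : V, Relation.ReflTransGen (fun a b => (a, b) ∈ A ∧ 0 < υ (a, b)) i k := by
  classical
  by_contra h
  push_neg at h
  obtain ⟨i0, hi0⟩ := h
  set R := fun a b : V => (a, b) ∈ A ∧ 0 < υ (a, b) with hR
  set T : Finset V := Finset.univ.filter (fun v => ¬ Relation.ReflTransGen R v k) with hT
  have hkT : k ∉ T := by simp [hT]; exact Relation.ReflTransGen.refl
  have hi0T : i0 ∈ T := by simp [hT]; exact hi0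
  have hcard : 1 ≤ T.card := Finset.card_pos.mpr ⟨i0, hi0T⟩
  have h1 : (T.card : ℝ) ≤ ∑ i ∈ T,
      ((∑ j ∈ Finset.univ.filter (fun j => (i, j) ∈ A), υ (i, j)) -
        (∑ l ∈ Finset.univ.filter (fun l => (l, i) ∈ A), υ (l, i))) := by
    calc (T.card : ℝ) = ∑ _i ∈ T, (1 : ℝ) := by simp
    _ ≤ _ := Finset.sum_le_sum (fun i hi => by
        have hik : i ≠ k := by rintro rfl; exact hkT hi
        exact hflow i hik)
  have hzero : ∀ i ∈ T, ∀ j, j ∉ T → (if (i, j) ∈ A then υ (i, j) else 0) = 0 := by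
    intro i hi j hj
    split_ifs with hA
    · by_contra hne
      have hpos : 0 < υ (i, j) := lt_of_le_of_ne (hnn _) (Ne.symm hne)
      have hj' : Relation.ReflTransGen R j k := by
        simpa [hT] using hj
      have : Relation.ReflTransGen R i k :=
        Relation.ReflTransGen.head ⟨hA, hpos⟩ hj'
      simp [hT] at hi
      exact hi this
    · rfl
  have hout : ∀ i ∈ T, (∑ j ∈ Finset.univ.filter (fun j => (i, j) ∈ A), υ (i, j))
      = ∑ j ∈ T, (if (i, j) ∈ A then υ (i, j) else 0) := by
    intro i hi
    rw [Finset.sum_filter]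
    exact (Finset.sum_subset (Finset.subset_univ T)
      (fun j _ hj => hzero i hi j hj)).symm
  have hin : ∀ i ∈ T, (∑ l ∈ T, (if (l, i) ∈ A then υ (l, i) else 0))
      ≤ ∑ l ∈ Finset.univ.filter (fun l => (l, i) ∈ A), υ (l, i) := by
    intro i _
    calc (∑ l ∈ T, (if (l, i) ∈ A then υ (l, i) else 0))
        ≤ ∑ l ∈ Finset.univ, (if (l, i) ∈ A then υ (l, i) else 0) := by
          refine Finset.sum_le_sum_of_subset_of_nonneg (Finset.subset_univ T) ?_
          intro l _ _
          split_ifs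
          · exact hnn _
          · exact le_refl 0
      _ = _ := (Finset.sum_filter _ _).symm
  have hsum : ∑ i ∈ T,
      ((∑ j ∈ Finset.univ.filter (fun j => (i, j) ∈ A), υ (i, j)) -
        (∑ l ∈ Finset.univ.filter (fun l => (l, i) ∈ A), υ (l, i))) ≤ 0 := by
    have key : ∑ i ∈ T, ∑ j ∈ T, (if (i, j) ∈ A then υ (i, j) else 0)
        = ∑ i ∈ T, ∑ l ∈ T, (if (l, i) ∈ A then υ (l, i) else 0) :=
      Finset.sum_comm
    calc ∑ i ∈ T, ((∑ j ∈ Finset.univ.filter (fun j => (i, j) ∈ A), υ (i, j)) -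
          (∑ l ∈ Finset.univ.filter (fun l => (l, i) ∈ A), υ (l, i)))
        ≤ ∑ i ∈ T, ((∑ j ∈ T, (if (i, j) ∈ A then υ (i, j) else 0)) -
          (∑ l ∈ T, (if (l, i) ∈ A then υ (l, i) else 0))) := by
          refine Finset.sum_le_sum (fun i hi => ?_)
          rw [hout i hi]
          exact sub_le_sub_left (hin i hi) _
      _ = 0 := by rw [Finset.sum_sub_distrib, key, sub_self]
  have : (T.card : ℝ) ≤ 0 := le_trans h1 hsum
  have : (1 : ℝ) ≤ 0 := le_trans (by exact_mod_cast hcard) this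
  linarith
end

section
/- In the flow-based contiguity formulation, suppose for a zone k the constraints hold: for all i, Σ_j υ_{ijk} − Σ_l υ_{lik} ≥ d_{ik} − n_max h_{ik}; υ_{ijk} + υ_{jik} ≤ (n_max − 1) d_{ik} for all arcs (i,j); Σ_i h_{ik} = 1; h_{ik} ≤ d_{ik}; d, h binary; υ ≥ 0; and additionally υ_{ijk} + υ_{jik} ≤ (n_max − 1) d_{jk}. Then the set of beats assigned to zone k (those with d_{ik} = 1) induces a subgraph of the beat-adjacency graph in which every assigned beat has a directed positive-flow path to the unique sink beat of zone k; in particular the assigned set is connected in the underlying undirected adjacency graph. -/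
open scoped Classical in
/-- Shirabe-style contiguity constraints imply that every beat assigned to zone `k`
has a directed positive-flow path to the unique sink of the zone, and hence the
assigned set is connected in the underlying undirected adjacency graph. -/
theorem contiguity_constraints_imply_connectivity {I : Type*} [Fintype I]
    (𝓐 : Finset (I × I)) (hsymm : ∀ i j, (i, j) ∈ 𝓐 → (j, i) ∈ 𝓐)
    (nmax : ℕ) (hnmax : 1 ≤ nmax)
    (d h : I → ℝ) (υ : I → I → ℝ)
    (hd : ∀ i, d i = 0 ∨ d i = 1) (hh : ∀ i, h i = 0 ∨ h i = 1)
    (hυnn : ∀ i j, 0 ≤ υ i j)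
    (hflow : ∀ i,
      (∑ j ∈ Finset.univ.filter (fun j => (i, j) ∈ 𝓐), υ i j) -
        (∑ l ∈ Finset.univ.filter (fun l => (l, i) ∈ 𝓐), υ l i) ≥
        d i - (nmax : ℝ) * h i)
    (hcap : ∀ i j, (i, j) ∈ 𝓐 → υ i j + υ j i ≤ ((nmax : ℝ) - 1) * d i)
    (hcap' : ∀ i j, (i, j) ∈ 𝓐 → υ i j + υ j i ≤ ((nmax : ℝ) - 1) * d j)
    (hsink : ∑ i, h i = 1)
    (hhd : ∀ i, h i ≤ d i) :
    (∃! s, h s = 1) ∧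
    ∀ s, h s = 1 → ∀ i, d i = 1 →
      Relation.ReflTransGen
        (fun a b => (a, b) ∈ 𝓐 ∧ d a = 1 ∧ d b = 1 ∧ 0 < υ a b) i s ∧
      Relation.ReflTransGen
        (fun a b => (a, b) ∈ 𝓐 ∧ d a = 1 ∧ d b = 1) i s := by
  classical
  have hd0 : ∀ i, 0 ≤ d i := fun i => by rcases hd i with h' | h' <;> simp [h']
  have hh0 : ∀ i, 0 ≤ h i := fun i => by rcases hh i with h' | h' <;> simp [h']
  -- existence of a sink
  have hex : ∃ s, h s = 1 := by
    by_contra hc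
    push_neg at hc
    have hall : ∀ i, h i = 0 := fun i => (hh i).resolve_right (hc i)
    simp [hall] at hsink
  obtain ⟨s, hs⟩ := hex
  -- uniqueness of the sink
  have huniq : ∀ t, h t = 1 → t = s := by
    intro t ht
    by_contra hts
    have hst : s ≠ t := fun e => hts e.symm
    have h2 : ∑ x ∈ ({s, t} : Finset I), h x ≤ ∑ x, h x :=
      Finset.sum_le_sum_of_subset_of_nonneg (Finset.subset_univ _)
        (fun x _ _ => hh0 x)
    rw [Finset.sum_pair hst, hs, ht, hsink] at h2
    linarith
  -- positive flow forces both endpoints assigned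
  have hpos : ∀ a b, (a, b) ∈ 𝓐 → 0 < υ a b → d a = 1 ∧ d b = 1 := by
    intro a b hab hp
    constructor
    · rcases hd a with h' | h'
      · exfalso
        have hc := hcap a b hab
        rw [h', mul_zero] at hc
        have := hυnn b a
        linarith
      · exact h'
    · rcases hd b with h' | h'
      · exfalso
        have hc := hcap' a b hab
        rw [h', mul_zero] at hc
        have := hυnn b a
        linarith
      · exact h'
  refine ⟨⟨s, hs, huniq⟩, ?_⟩
  intro s' hs' i hdi
  have hss : s' = s := huniq s' hs'
  subst hss
  set rel : I → I → Prop :=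
    fun a b => (a, b) ∈ 𝓐 ∧ d a = 1 ∧ d b = 1 ∧ 0 < υ a b with hrel
  suffices hmain : Relation.ReflTransGen rel i s' by
    exact ⟨hmain, Relation.ReflTransGen.mono (fun a b hab => ⟨hab.1, hab.2.1, hab.2.2.1⟩) i s' hmain⟩
  by_contra hns
  set R : Finset I :=
    Finset.univ.filter (fun x => Relation.ReflTransGen rel i x) with hR
  have hmem : ∀ x, x ∈ R ↔ Relation.ReflTransGen rel i x := by
    intro x
    simp [hR]
  have hiR : i ∈ R := (hmem i).mpr Relation.ReflTransGen.refl
  have hsR : s' ∉ R := fun hsr => hns ((hmem s').mp hsr)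
  -- flows leaving R are zero
  have hzero : ∀ a ∈ R, ∀ b, b ∉ R → (a, b) ∈ 𝓐 → υ a b = 0 := by
    intro a ha b hb hab
    by_contra hne
    have hp : 0 < υ a b := lt_of_le_of_ne (hυnn a b) (Ne.symm hne)
    obtain ⟨hda, hdb⟩ := hpos a b hab hp
    have haR : Relation.ReflTransGen rel i a := (hmem a).mp ha
    exact hb ((hmem b).mpr (haR.tail ⟨hab, hda, hdb, hp⟩))
  -- h vanishes on R
  have hhR : ∀ x ∈ R, h x = 0 := by
    intro x hx
    rcases hh x with h' | h'
    · exact h'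
    · rw [huniq x h'] at hx
      exact absurd hx hsR
  -- summed flow inequality
  have hsum : ∑ x ∈ R, (d x - (nmax : ℝ) * h x) ≤
      ∑ x ∈ R, ((∑ j ∈ Finset.univ.filter (fun j => (x, j) ∈ 𝓐), υ x j) -
        (∑ l ∈ Finset.univ.filter (fun l => (l, x) ∈ 𝓐), υ l x)) :=
    Finset.sum_le_sum (fun x _ => hflow x)
  -- right-hand side is at least 1
  have hRHS : (1 : ℝ) ≤ ∑ x ∈ R, (d x - (nmax : ℝ) * h x) := by
    have he : ∑ x ∈ R, (d x - (nmax : ℝ) * h x) = ∑ x ∈ R, d x := by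
      refine Finset.sum_congr rfl fun x hx => ?_
      rw [hhR x hx]; ring
    rw [he]
    calc (1 : ℝ) = d i := hdi.symm
      _ ≤ ∑ x ∈ R, d x := Finset.single_le_sum (fun x _ => hd0 x) hiR
  -- outflow restricted to R
  have hout : ∀ x ∈ R,
      (∑ j ∈ Finset.univ.filter (fun j => (x, j) ∈ 𝓐), υ x j) =
        ∑ j ∈ R.filter (fun j => (x, j) ∈ 𝓐), υ x j := by
    intro x hx
    symm
    apply Finset.sum_subset
    · exact Finset.filter_subset_filter _ (Finset.subset_univ R)
    · intro j hj hjR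
      simp only [Finset.mem_filter, Finset.mem_univ, true_and] at hj
      have hjnR : j ∉ R := fun hjR' => hjR (Finset.mem_filter.mpr ⟨hjR', hj⟩)
      exact hzero x hx j hjnR hj
  -- inflow dominates restricted inflow
  have hin : ∀ x ∈ R,
      ∑ l ∈ R.filter (fun l => (l, x) ∈ 𝓐), υ l x ≤
        ∑ l ∈ Finset.univ.filter (fun l => (l, x) ∈ 𝓐), υ l x := by
    intro x _
    apply Finset.sum_le_sum_of_subset_of_nonneg
      (Finset.filter_subset_filter _ (Finset.subset_univ R))
    intro l _ _
    exact hυnn l x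
  -- restricted out-sum equals restricted in-sum
  have hkey : ∑ x ∈ R, ∑ j ∈ R.filter (fun j => (x, j) ∈ 𝓐), υ x j =
      ∑ x ∈ R, ∑ l ∈ R.filter (fun l => (l, x) ∈ 𝓐), υ l x := by
    simp only [Finset.sum_filter]
    exact Finset.sum_comm
  have hA : ∑ x ∈ R, ((∑ j ∈ Finset.univ.filter (fun j => (x, j) ∈ 𝓐), υ x j) -
      (∑ l ∈ Finset.univ.filter (fun l => (l, x) ∈ 𝓐), υ l x)) ≤ 0 := by
    rw [Finset.sum_sub_distrib]
    have h1 : ∑ x ∈ R, ∑ j ∈ Finset.univ.filter (fun j => (x, j) ∈ 𝓐), υ x j =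
        ∑ x ∈ R, ∑ j ∈ R.filter (fun j => (x, j) ∈ 𝓐), υ x j :=
      Finset.sum_congr rfl hout
    have h2 : ∑ x ∈ R, ∑ l ∈ R.filter (fun l => (l, x) ∈ 𝓐), υ l x ≤
        ∑ x ∈ R, ∑ l ∈ Finset.univ.filter (fun l => (l, x) ∈ 𝓐), υ l x :=
      Finset.sum_le_sum hin
    linarith
  linarith
end
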